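/- Let V be a real Hilbert space, let a : V × V → ℝ be a bilinear form that is coercive with constant ᾱ > 0, let α > 0, and let ζ ↦ F_ζ be an L_F-Lipschitz family of loads. Let V_h ⊆ V be a closed subspace and suppose T_h : V_h → V_h is a map such that for every ζ_h ∈ V_h, a(T_h(ζ_h), v_h) = α F_{ζ_h}(v_h) for all v_h ∈ V_h (the discrete solution operator). If α L_F < ᾱ, then T_h has exactly one fixed point in V_h; equivalently, there is a unique u_h ∈ V_h with a(u_h, v_h) = α F_{u_h}(v_h) for all v_h ∈ V_h. -/

import Mathlib

/-- Existence and uniqueness of a fixed point of the discrete solution operator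
on a closed subspace `V_h`, when `α L_F < ᾱ`. -/
theorem stmt_3 {V : Type*} [NormedAddCommGroup V] [InnerProductSpace ℝ V] [CompleteSpace V]
    (a : V →ₗ[ℝ] V →ₗ[ℝ] ℝ) (abar α L_F : ℝ) (habar : 0 < abar) (hα : 0 < α)
    (hcoer : ∀ v : V, abar * ‖v‖ ^ 2 ≤ a v v)
    (F : V → (V →L[ℝ] ℝ))
    (hLip : ∀ ζ η : V, ‖F ζ - F η‖ ≤ L_F * ‖ζ - η‖)
    (Vh : Submodule ℝ V) (hVh : IsClosed (Vh : Set V))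
    (Th : Vh → Vh)
    (hTh : ∀ ζh : Vh, ∀ vh : Vh, a (Th ζh : V) (vh : V) = α * F (ζh : V) (vh : V))
    (hsmall : α * L_F < abar) :
    (∃! uh : Vh, Th uh = uh) ∧
      (∃! uh : Vh, ∀ vh : Vh, a (uh : V) (vh : V) = α * F (uh : V) (vh : V)) := by
  haveI : CompleteSpace Vh := hVh.completeSpace_coe
  set K : ℝ := max (α * L_F / abar) 0 with hK
  have hK0 : 0 ≤ K := le_max_right _ _
  have hK1 : K < 1 := by
    apply max_lt _ one_pos
    rw [div_lt_one habar]
    exact hsmall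
  -- contraction estimate
  have key : ∀ ζ η : Vh, ‖Th ζ - Th η‖ ≤ K * ‖ζ - η‖ := by
    intro ζ η
    set d : Vh := Th ζ - Th η with hd
    have hdc : ((d : V)) = (Th ζ : V) - (Th η : V) := rfl
    have had : a (d : V) (d : V) = α * ((F (ζ : V) - F (η : V)) (d : V)) := by
      have e1 : a (d : V) (d : V) = a ((Th ζ : V) - (Th η : V)) (d : V) := by rw [hdc]
      rw [map_sub, LinearMap.sub_apply] at e1
      rw [e1, hTh ζ d, hTh η d]
      simp [ContinuousLinearMap.sub_apply]
      ring
    have hbound : a (d : V) (d : V) ≤ α * L_F * ‖(ζ : V) - (η : V)‖ * ‖(d : V)‖ := by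
      rw [had]
      have h1 : (F (ζ : V) - F (η : V)) (d : V) ≤ ‖F (ζ : V) - F (η : V)‖ * ‖(d : V)‖ :=
        le_trans (le_abs_self _) ((F (ζ : V) - F (η : V)).le_opNorm _)
      have h2 : ‖F (ζ : V) - F (η : V)‖ * ‖(d : V)‖ ≤ L_F * ‖(ζ : V) - (η : V)‖ * ‖(d : V)‖ :=
        mul_le_mul_of_nonneg_right (hLip _ _) (norm_nonneg _)
      calc α * ((F (ζ : V) - F (η : V)) (d : V)) ≤ α * (L_F * ‖(ζ : V) - (η : V)‖ * ‖(d : V)‖) :=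
            mul_le_mul_of_nonneg_left (h1.trans h2) hα.le
        _ = α * L_F * ‖(ζ : V) - (η : V)‖ * ‖(d : V)‖ := by ring
    have hco := hcoer (d : V)
    have hndd : ‖d‖ = ‖(d : V)‖ := rfl
    have hnze : ‖(ζ : V) - (η : V)‖ = ‖ζ - η‖ := rfl
    rcases eq_or_lt_of_le (norm_nonneg d) with h0 | h0
    · rw [← h0]
      positivity
    · have h0' : (0 : ℝ) < ‖(d : V)‖ := by rwa [← hndd]
      have : abar * ‖(d : V)‖ ^ 2 ≤ α * L_F * ‖ζ - η‖ * ‖(d : V)‖ := by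
        rw [← hnze]; exact hco.trans hbound
      have h3 : abar * ‖(d : V)‖ ≤ α * L_F * ‖ζ - η‖ := by
        have := (mul_le_mul_iff_of_pos_right h0').mp (by nlinarith : abar * ‖(d : V)‖ * ‖(d : V)‖ ≤ (α * L_F * ‖ζ - η‖) * ‖(d : V)‖)
        exact this
      have h4 : ‖(d : V)‖ ≤ α * L_F / abar * ‖ζ - η‖ := by
        rw [div_mul_eq_mul_div, le_div_iff₀ habar]
        nlinarith
      rw [hndd]
      refine h4.trans (mul_le_mul_of_nonneg_right (le_max_left _ _) (norm_nonneg _))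
  have hlipW : LipschitzWith (Real.toNNReal K) Th := by
    apply LipschitzWith.of_dist_le_mul
    intro x y
    rw [dist_eq_norm, dist_eq_norm, Real.coe_toNNReal K hK0]
    exact key x y
  have hcontr : ContractingWith (Real.toNNReal K) Th := by
    refine ⟨?_, hlipW⟩
    rw [← NNReal.coe_lt_coe, Real.coe_toNNReal K hK0]
    exact hK1
  have hfix : ∃! uh : Vh, Th uh = uh := by
    haveI : Nonempty Vh := ⟨0⟩
    exact ⟨hcontr.fixedPoint Th, hcontr.fixedPoint_isFixedPt,
      fun y hy => hcontr.fixedPoint_unique hy⟩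
  have hequiv : ∀ uh : Vh, Th uh = uh ↔
      ∀ vh : Vh, a (uh : V) (vh : V) = α * F (uh : V) (vh : V) := by
    intro uh
    constructor
    · intro h vh
      have := hTh uh vh
      rwa [h] at this
    · intro h
      set d : Vh := Th uh - uh with hd
      have hdc : ((d : V)) = (Th uh : V) - (uh : V) := rfl
      have had : a (d : V) (d : V) = 0 := by
        have e1 : a (d : V) (d : V) = a ((Th uh : V) - (uh : V)) (d : V) := by rw [hdc]
        rw [map_sub, LinearMap.sub_apply] at e1
        rw [e1, hTh uh d, h d]
        ring
      have hco := hcoer (d : V)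
      rw [had] at hco
      have hd0 : d = 0 := by
        by_contra hne
        have h0 : (0 : ℝ) < ‖(d : V)‖ := by
          have : (0 : ℝ) < ‖d‖ := norm_pos_iff.mpr hne
          exact this
        nlinarith [mul_pos (mul_pos habar h0) h0]
      have := sub_eq_zero.mp (hd ▸ hd0)
      exact this
  refine ⟨hfix, ?_⟩
  obtain ⟨u, hu, hu'⟩ := hfix
  exact ⟨u, (hequiv u).1 hu, fun y hy => hu' y ((hequiv y).2 hy)⟩
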